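/- arXiv:1102.1616 — 3 statements merged into one kernel-verified Lean document; each statement's English description precedes it below -/
import Mathlib

section
/- If x, x' ∈ [0,1) satisfy |D_n(x)| = |D_n(x')| for every n ≥ 1, then T(x) = T(x'). -/
open Set MeasureTheory ENNReal

/-- `phi x` is the distance from `x` to the nearest integer. -/
noncomputable def phi (x : ℝ) : ℝ := |x - (round x : ℤ)|

/-- The Takagi function. -/
noncomputable def T (x : ℝ) : ℝ := ∑' n : ℕ, phi (2 ^ n * x) / 2 ^ n

/-- The `n`-th binary digit of `x` (terminating expansion for dyadic rationals). -/
noncomputable def eps (n : ℕ) (x : ℝ) : ℤ := ⌊2 ^ n * x⌋ - 2 * ⌊2 ^ (n - 1) * x⌋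

/-- `D k x = ∑_{j=1}^k (-1)^{ε_j(x)}`, the excess of 0 digits over 1 digits. -/
noncomputable def D (k : ℕ) (x : ℝ) : ℤ := ∑ j ∈ Finset.Icc 1 k, (1 - 2 * eps j x)

/-- The level set of the Takagi function at level `y`. -/
def L (y : ℝ) : Set ℝ := {x | x ∈ Set.Icc (0:ℝ) 1 ∧ T x = y}

/-- `x` is a balanced dyadic rational of order `m`. -/
def BalancedOfOrder (x : ℝ) (m : ℕ) : Prop :=
  x ∈ Set.Ico (0:ℝ) 1 ∧ (∃ k : ℤ, x = (k : ℝ) / 2 ^ (2 * m)) ∧ D (2 * m) x = 0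

/-- The generation of a balanced dyadic rational of order `m`:
the number of indices `1 ≤ j ≤ 2m` with `D j x = 0`. -/
noncomputable def generation (x : ℝ) (m : ℕ) : ℕ :=
  ((Finset.Icc 1 (2 * m)).filter (fun j => D j x = 0)).card

/-- A balanced dyadic rational of order `m` is leading if `D j x ≥ 0` for all `1 ≤ j ≤ 2m`. -/
def Leading (x : ℝ) (m : ℕ) : Prop := ∀ j ∈ Finset.Icc 1 (2 * m), 0 ≤ D j x

/-- The equivalence relation whose classes are the local level sets. -/
def locSetoid : Setoid ℝ where
  r x x' := ∀ n : ℕ, 1 ≤ n → |D n x| = |D n x'|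
  iseqv := ⟨fun _ _ _ => rfl, fun h n hn => (h n hn).symm,
    fun h g n hn => (h n hn).trans (g n hn)⟩

/-- The set of local level sets contained in `L y`: the image of `L y ∩ [0,1)`
under the quotient map of `locSetoid`. -/
def locClasses (y : ℝ) : Set (Quotient locSetoid) :=
  Quotient.mk locSetoid '' (L y ∩ Set.Ico (0:ℝ) 1)


-- ===== Auxiliary lemmas =====

lemma eps_mem (n : ℕ) (hn : 1 ≤ n) (x : ℝ) : eps n x = 0 ∨ eps n x = 1 := by
  obtain ⟨l, rfl⟩ : ∃ l, n = l + 1 := ⟨n - 1, by omega⟩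
  set y : ℝ := 2 ^ l * x with hy
  have h2 : (2:ℝ) ^ (l+1) * x = 2 * y := by rw [hy]; ring
  have hlow : 2 * ⌊y⌋ ≤ ⌊2 * y⌋ := by
    apply Int.le_floor.2
    push_cast
    nlinarith [Int.floor_le y]
  have hup : ⌊2 * y⌋ < 2 * ⌊y⌋ + 2 := by
    apply Int.floor_lt.2
    push_cast
    nlinarith [Int.lt_floor_add_one y]
  have hr : ⌊(2:ℝ) ^ l * x⌋ = ⌊y⌋ := rfl
  simp only [eps, h2, Nat.add_sub_cancel]
  omega

lemma eps_shift (n k : ℕ) (hk : 1 ≤ k) (x : ℝ) :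
    eps (n + k) x = eps k (Int.fract (2 ^ n * x)) := by
  obtain ⟨l, rfl⟩ : ∃ l, k = l + 1 := ⟨k - 1, by omega⟩
  have key : ∀ j : ℕ, ⌊2 ^ (n + j) * x⌋ = 2 ^ j * ⌊2 ^ n * x⌋ + ⌊2 ^ j * Int.fract (2 ^ n * x)⌋ := by
    intro j
    have : (2:ℝ) ^ (n + j) * x = 2 ^ j * Int.fract (2 ^ n * x) + ((2 ^ j * ⌊2 ^ n * x⌋ : ℤ) : ℝ) := by
      rw [Int.fract]
      push_cast
      ring
    rw [this, Int.floor_add_intCast]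
    ring
  have h1 : n + (l + 1) - 1 = n + l := by omega
  have h2 : l + 1 - 1 = l := by omega
  simp only [eps, h1, h2, key l, key (l+1)]
  ring

lemma partial_sum_digits (z : ℝ) (hz : z ∈ Set.Ico (0:ℝ) 1) (N : ℕ) :
    ∑ k ∈ Finset.range N, (eps (k+1) z : ℝ) / 2 ^ (k+1) = (⌊2 ^ N * z⌋ : ℝ) / 2 ^ N := by
  induction N with
  | zero => simp [Int.floor_eq_zero_iff.2 (by simpa using hz)]
  | succ N ih =>
    rw [Finset.sum_range_succ, ih]
    simp only [eps, Nat.add_sub_cancel]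
    have h2 : (2:ℝ) ^ (N+1) ≠ 0 := by positivity
    field_simp
    push_cast
    ring

lemma summable_digits (z : ℝ) (hz : z ∈ Set.Ico (0:ℝ) 1) :
    Summable (fun k : ℕ => (eps (k+1) z : ℝ) / 2 ^ (k+1)) := by
  refine Summable.of_nonneg_of_le (f := fun k : ℕ => (1/2:ℝ) ^ k) ?_ ?_ summable_geometric_two
  · intro k
    rcases eps_mem (k+1) (by omega) z with h | h <;> rw [h] <;> positivity
  · intro k
    rcases eps_mem (k+1) (by omega) z with h | h <;> rw [h]
    · simp
    · push_cast
      simp only [one_div, inv_pow]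
      rw [inv_le_inv₀ (by positivity) (by positivity)]
      exact pow_le_pow_right₀ (by norm_num) (by omega)

lemma hasSum_digits (z : ℝ) (hz : z ∈ Set.Ico (0:ℝ) 1) :
    HasSum (fun k : ℕ => (eps (k+1) z : ℝ) / 2 ^ (k+1)) z := by
  have hs := (summable_digits z hz).hasSum
  have ht := hs.tendsto_sum_nat
  have heq : ∀ N : ℕ, ∑ k ∈ Finset.range N, (eps (k+1) z : ℝ) / 2 ^ (k+1)
      = z - Int.fract (2 ^ N * z) / 2 ^ N := by
    intro N
    rw [partial_sum_digits z hz N]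
    have h3 : Int.fract (2 ^ N * z) = 2 ^ N * z - ⌊2 ^ N * z⌋ := rfl
    have h2 : (2:ℝ) ^ N ≠ 0 := by positivity
    field_simp
    rw [h3]
    ring
  have ht2 : Filter.Tendsto (fun N : ℕ => z - Int.fract (2 ^ N * z) / 2 ^ N)
      Filter.atTop (nhds z) := by
    have h0 : Filter.Tendsto (fun N : ℕ => Int.fract (2 ^ N * z) / 2 ^ N)
        Filter.atTop (nhds 0) := by
      apply squeeze_zero (g := fun N : ℕ => (1/2:ℝ) ^ N)
      · intro N
        exact div_nonneg (Int.fract_nonneg _) (by positivity)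
      · intro N
        rw [div_le_iff₀ (by positivity), one_div, inv_pow, inv_mul_eq_div,
          div_self (by positivity)]
        exact (Int.fract_lt_one _).le
      · exact tendsto_pow_atTop_nhds_zero_of_lt_one (by norm_num) (by norm_num)
    simpa using tendsto_const_nhds.sub h0
  rw [Filter.tendsto_congr heq] at ht
  rwa [tendsto_nhds_unique ht ht2] at hs

lemma phi_add_int (z : ℝ) (N : ℤ) : phi (z + N) = phi z := by
  unfold phi
  rw [round_add_intCast]
  push_cast
  ring_nf

lemma phi_of_lt_half (z : ℝ) (h0 : 0 ≤ z) (h : z < 1/2) : phi z = z := by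
  unfold phi
  have : round z = 0 := by
    rw [round_eq, Int.floor_eq_zero_iff]
    constructor <;> simp <;> linarith
  rw [this]
  simp [abs_of_nonneg h0]

lemma phi_of_ge_half (z : ℝ) (h : 1/2 ≤ z) (h1 : z < 1) : phi z = 1 - z := by
  unfold phi
  have : round z = 1 := by
    rw [round_eq]
    rw [Int.floor_eq_iff]
    push_cast
    constructor <;> linarith
  rw [this]
  push_cast
  rw [abs_of_nonpos (by linarith)]
  ring

lemma hasSum_phi (x : ℝ) (n : ℕ) :
    HasSum (fun k : ℕ => (if eps (n+k+2) x = eps (n+1) x then (0:ℝ) else 1) / 2 ^ (n+k+2))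
      (phi (2 ^ n * x) / 2 ^ n) := by
  set z := Int.fract (2 ^ n * x) with hzdef
  have hz : z ∈ Set.Ico (0:ℝ) 1 := ⟨Int.fract_nonneg _, Int.fract_lt_one _⟩
  have hphi : phi (2 ^ n * x) = phi z := by
    have : (2:ℝ) ^ n * x = z + (⌊2 ^ n * x⌋ : ℤ) := by
      rw [hzdef]
      have := Int.floor_add_fract ((2:ℝ) ^ n * x)
      linarith
    rw [this, phi_add_int]
  have hfloorz : ⌊z⌋ = 0 := Int.floor_eq_zero_iff.2 (by simpa using hz)
  have he1 : eps 1 z = ⌊2 * z⌋ := by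
    simp [eps, hfloorz]
  have hd := hasSum_digits z hz
  have hd1 : HasSum (fun k : ℕ => (eps (k+2) z : ℝ) / 2 ^ (k+2)) (z - (eps 1 z : ℝ) / 2) := by
    have := (hasSum_nat_add_iff' (f := fun k : ℕ => (eps (k+1) z : ℝ) / 2 ^ (k+1)) 1).2 hd
    simp only [Finset.range_one, Finset.sum_singleton, pow_one] at this
    have heq : ∀ k : ℕ, k + 1 + 1 = k + 2 := fun k => rfl
    simpa [heq] using this
  have hshift : ∀ k : ℕ, eps (n + k + 2) x = eps (k+2) z := by
    intro k
    have := eps_shift n (k+2) (by omega) x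
    rwa [show n + (k + 2) = n + k + 2 by omega] at this
  have he1x : eps (n+1) x = eps 1 z := eps_shift n 1 (by omega) x
  have key : HasSum (fun k : ℕ => (if eps (n+k+2) x = eps (n+1) x then (0:ℝ) else 1) / 2 ^ (k+2))
      (phi z) := by
    rcases eps_mem 1 (by omega) z with he | he
    · have hzlt : z < 1/2 := by
        have h2 : ⌊2 * z⌋ = 0 := by rw [← he1, he]
        have := (Int.floor_eq_zero_iff.1 h2).2
        linarith
      rw [phi_of_lt_half z hz.1 hzlt]
      have hfun : (fun k : ℕ => (if eps (n+k+2) x = eps (n+1) x then (0:ℝ) else 1) / 2 ^ (k+2))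
          = fun k : ℕ => (eps (k+2) z : ℝ) / 2 ^ (k+2) := by
        funext k
        rw [hshift k, he1x, he]
        rcases eps_mem (k+2) (by omega) z with h | h <;> rw [h] <;> norm_num
      rw [hfun]
      have : z - (eps 1 z : ℝ) / 2 = z := by rw [he]; norm_num
      rwa [this] at hd1
    · have hzge : 1/2 ≤ z := by
        have h2 : ⌊2 * z⌋ = 1 := by rw [← he1, he]
        have := (Int.floor_eq_iff (R := ℝ) (z := 1)).1 h2
        push_cast at this
        linarith [this.1]
      rw [phi_of_ge_half z hzge hz.2]
      have geom : HasSum (fun k : ℕ => (1:ℝ) / 2 ^ (k+2)) (1/2) := by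
        have := hasSum_geometric_two.mul_right (1/4)
        norm_num at this ⊢
        convert this using 2 with k
        · rfl
        rw [pow_add]
        norm_num
        simp [one_div, mul_comm]
      have hd1' : HasSum (fun k : ℕ => (eps (k+2) z : ℝ) / 2 ^ (k+2)) (z - 1/2) := by
        have : z - (eps 1 z : ℝ) / 2 = z - 1/2 := by rw [he]; norm_num
        rwa [this] at hd1
      have hsub := geom.sub hd1'
      have hfun : (fun k : ℕ => (if eps (n+k+2) x = eps (n+1) x then (0:ℝ) else 1) / 2 ^ (k+2))
          = fun k : ℕ => (1:ℝ) / 2 ^ (k+2) - (eps (k+2) z : ℝ) / 2 ^ (k+2) := by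
        funext k
        rw [hshift k, he1x, he]
        rcases eps_mem (k+2) (by omega) z with h | h <;> rw [h] <;> norm_num
      rw [hfun]
      convert hsub using 1
      · rfl
      ring
  have final := key.div_const ((2:ℝ) ^ n)
  have hfun2 : (fun k : ℕ => (if eps (n+k+2) x = eps (n+1) x then (0:ℝ) else 1) / 2 ^ (k+2) / 2 ^ n)
      = fun k : ℕ => (if eps (n+k+2) x = eps (n+1) x then (0:ℝ) else 1) / 2 ^ (n+k+2) := by
    funext k
    rw [div_div, ← pow_add]
    ring_nf
  rw [hfun2] at final
  rwa [hphi]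

/-- number of indices `1 ≤ j ≤ m-1` whose digit differs from the `m`-th digit -/
noncomputable def cnt (m : ℕ) (x : ℝ) : ℕ :=
  ((Finset.Icc 1 (m-1)).filter (fun j => eps m x ≠ eps j x)).card

lemma phi_nonneg (t : ℝ) : 0 ≤ phi t := abs_nonneg _

lemma summable_T (x : ℝ) : Summable (fun n : ℕ => phi (2 ^ n * x) / 2 ^ n) := by
  refine Summable.of_nonneg_of_le (f := fun n : ℕ => (1/2:ℝ) ^ n) ?_ ?_ summable_geometric_two
  · intro n; exact div_nonneg (phi_nonneg _) (by positivity)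
  · intro n
    rw [div_le_iff₀ (by positivity)]
    simp only [one_div, inv_pow, ← inv_pow, inv_mul_eq_div]
    rw [inv_pow, inv_mul_eq_div, div_self (by positivity)]
    calc phi (2 ^ n * x) ≤ 1/2 := abs_sub_round _
      _ ≤ 1 := by norm_num

lemma T_eq_toReal (x : ℝ) :
    T x = (∑' m : ℕ, (cnt m x : ℝ≥0∞) * ENNReal.ofReal ((1:ℝ) / 2 ^ m)).toReal := by
  have h1 : ENNReal.ofReal (T x) = ∑' n : ℕ, ENNReal.ofReal (phi (2 ^ n * x) / 2 ^ n) :=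
    ENNReal.ofReal_tsum_of_nonneg (fun n => div_nonneg (phi_nonneg _) (by positivity)) (summable_T x)
  have h2 : ∀ n : ℕ, ENNReal.ofReal (phi (2 ^ n * x) / 2 ^ n)
      = ∑' k : ℕ, ENNReal.ofReal ((if eps (n+k+2) x = eps (n+1) x then (0:ℝ) else 1) / 2 ^ (n+k+2)) := by
    intro n
    rw [← (hasSum_phi x n).tsum_eq]
    exact ENNReal.ofReal_tsum_of_nonneg
      (fun k => by positivity) (hasSum_phi x n).summable
  set F : ℕ × ℕ → ℝ≥0∞ := fun p =>
    ENNReal.ofReal ((if eps (p.1+p.2+2) x = eps (p.1+1) x then (0:ℝ) else 1) / 2 ^ (p.1+p.2+2))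
    with hF
  have h3 : ENNReal.ofReal (T x) = ∑' p : ℕ × ℕ, F p := by
    rw [h1, ENNReal.tsum_prod']
    exact tsum_congr fun n => by rw [h2 n]
  set G : ℕ × ℕ → ℝ≥0∞ := fun q =>
    if 1 ≤ q.2 ∧ q.2 + 1 ≤ q.1 ∧ eps q.1 x ≠ eps q.2 x then ENNReal.ofReal ((1:ℝ) / 2 ^ q.1) else 0
    with hG
  have hreindex : ∑' p : ℕ × ℕ, F p = ∑' q : ℕ × ℕ, G q := by
    set i : ℕ × ℕ → ℕ × ℕ := fun p => (p.1 + p.2 + 2, p.1 + 1) with hi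
    have hinj : Function.Injective i := by
      intro p q hpq
      simp only [hi, Prod.mk.injEq] at hpq
      obtain ⟨h1', h2'⟩ := hpq
      have : p.1 = q.1 := by omega
      have : p.2 = q.2 := by omega
      exact Prod.ext ‹p.1 = q.1› ‹p.2 = q.2›
    have hsupp : Function.support G ⊆ Set.range i := by
      intro q hq
      simp only [Function.mem_support, hG] at hq
      by_cases hcond : 1 ≤ q.2 ∧ q.2 + 1 ≤ q.1 ∧ eps q.1 x ≠ eps q.2 x
      · refine ⟨(q.2 - 1, q.1 - q.2 - 1), ?_⟩
        simp only [hi]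
        obtain ⟨ha, hb, -⟩ := hcond
        exact Prod.ext (by omega) (by omega)
      · rw [if_neg hcond] at hq
        exact absurd rfl hq
    have hcomp : ∀ p : ℕ × ℕ, G (i p) = F p := by
      intro p
      simp only [hi, hG, hF]
      have hc1 : 1 ≤ p.1 + 1 := by omega
      have hc2 : p.1 + 1 + 1 ≤ p.1 + p.2 + 2 := by omega
      by_cases hne : eps (p.1 + p.2 + 2) x = eps (p.1 + 1) x
      · simp [hc1, hc2, hne]
      · simp [hc1, hc2, hne]
    rw [← hinj.tsum_eq hsupp]
    exact (tsum_congr hcomp).symm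
  have h4 : ∀ m : ℕ, ∑' j : ℕ, G (m, j) = (cnt m x : ℝ≥0∞) * ENNReal.ofReal ((1:ℝ) / 2 ^ m) := by
    intro m
    have hvanish : ∀ j ∉ Finset.Icc 1 (m-1), G (m, j) = 0 := by
      intro j hj
      simp only [Finset.mem_Icc, not_and_or, not_le] at hj
      simp only [hG]
      rw [if_neg]
      rintro ⟨ha, hb, -⟩
      omega
    rw [tsum_eq_sum hvanish]
    have : ∀ j ∈ Finset.Icc 1 (m-1), G (m, j)
        = if eps m x ≠ eps j x then ENNReal.ofReal ((1:ℝ) / 2 ^ m) else 0 := by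
      intro j hj
      simp only [Finset.mem_Icc] at hj
      simp only [hG]
      by_cases hne : eps m x ≠ eps j x
      · rw [if_pos ⟨hj.1, by omega, hne⟩, if_pos hne]
      · rw [if_neg (by tauto), if_neg hne]
    rw [Finset.sum_congr rfl this, ← Finset.sum_filter, Finset.sum_const, cnt]
    simp [mul_comm]
  have h5 : ENNReal.ofReal (T x) = ∑' m : ℕ, (cnt m x : ℝ≥0∞) * ENNReal.ofReal ((1:ℝ) / 2 ^ m) := by
    rw [h3, hreindex, ENNReal.tsum_prod']
    exact tsum_congr h4
  rw [← h5, ENNReal.toReal_ofReal]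
  exact tsum_nonneg fun n => div_nonneg (phi_nonneg _) (by positivity)

lemma D_succ (l : ℕ) (x : ℝ) : D (l+1) x = D l x + (1 - 2 * eps (l+1) x) := by
  rw [D, D, Finset.sum_Icc_succ_top (by omega)]

lemma cnt_eq (m : ℕ) (hm : 1 ≤ m) (x : ℝ) :
    (2:ℤ) * cnt m x = (m - 1 : ℤ) + (D (m-1) x)^2 - |D (m-1) x| * |D m x| := by
  obtain ⟨l, rfl⟩ : ∃ l, m = l + 1 := ⟨m - 1, by omega⟩
  have hl : l + 1 - 1 = l := by omega
  set s : ℤ := 1 - 2 * eps (l+1) x with hs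
  have hsval : s = 1 ∨ s = -1 := by
    rcases eps_mem (l+1) (by omega) x with h | h <;> rw [hs, h] <;> norm_num
  have hmain : (2:ℤ) * cnt (l+1) x = l - s * D l x := by
    have hterm : ∀ j ∈ Finset.Icc 1 l,
        (if eps (l+1) x ≠ eps j x then (2:ℤ) else 0) = 1 - (1 - 2 * eps j x) * s := by
      intro j hj
      simp only [Finset.mem_Icc] at hj
      rcases eps_mem j hj.1 x with h1 | h1 <;>
        rcases eps_mem (l+1) (by omega) x with h2 | h2 <;>
        simp [hs, h1, h2]
    have hcard : (2:ℤ) * cnt (l+1) x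
        = ∑ j ∈ Finset.Icc 1 l, (if eps (l+1) x ≠ eps j x then (2:ℤ) else 0) := by
      rw [← Finset.sum_filter, Finset.sum_const, cnt, hl]
      push_cast
      ring
    rw [hcard, Finset.sum_congr rfl hterm]
    rw [Finset.sum_sub_distrib, Finset.sum_const, Nat.card_Icc]
    rw [← Finset.sum_mul, ← D]
    simp
    ring
  have habs : |D l x| * |D (l+1) x| = (D l x)^2 + s * D l x := by
    have hD : D (l+1) x = D l x + s := D_succ l x
    rw [← abs_mul, hD]
    have hnn : 0 ≤ D l x * (D l x + s) := by
      rcases hsval with h | h <;> rw [h] <;>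
        nlinarith [sq_nonneg (D l x), sq_nonneg (D l x + 1), sq_nonneg (D l x - 1)]
    rw [abs_of_nonneg hnn]
    ring
  rw [hmain, hl, habs]
  push_cast
  ring

lemma D_zero (x : ℝ) : D 0 x = 0 := by simp [D]

theorem stmt0 (x x' : ℝ) (hx : x ∈ Set.Ico (0:ℝ) 1) (hx' : x' ∈ Set.Ico (0:ℝ) 1)
    (h : ∀ n : ℕ, 1 ≤ n → |D n x| = |D n x'|) : T x = T x' := by
  have hc : ∀ m : ℕ, cnt m x = cnt m x' := by
    intro m
    rcases Nat.eq_zero_or_pos m with rfl | hm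
    · have he : Finset.Icc 1 (0-1) = (∅ : Finset ℕ) := rfl
      simp [cnt, he]
    · have e1 := cnt_eq m hm x
      have e2 := cnt_eq m hm x'
      have hDm : |D m x| = |D m x'| := h m hm
      have hDm1 : |D (m-1) x| = |D (m-1) x'| := by
        rcases Nat.eq_zero_or_pos (m-1) with h0 | h1
        · rw [h0, D_zero, D_zero]
        · exact h (m-1) h1
      have hsq : (D (m-1) x)^2 = (D (m-1) x')^2 := by
        rw [← sq_abs, hDm1, sq_abs]
      have : (2:ℤ) * cnt m x = 2 * cnt m x' := by rw [e1, e2, hDm, hDm1, hsq]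
      omega
  rw [T_eq_toReal x, T_eq_toReal x']
  congr 1
  exact tsum_congr fun m => by rw [hc m]
end

section
/- Suppose y ∈ ℝ is either a dyadic rational (y = k/2^n for some integers k, n ≥ 0) or of the form y = k/4^n + (2/3)·4^{-n} for some integers n ≥ 1 and k ≥ 0. Then there are only finitely many balanced dyadic rationals x₀ ∈ B (of order m = m(x₀)) such that T(x₀) < y < T(x₀) + (2/3)·4^{-m}. -/
open Set MeasureTheory ENNReal

lemma phi_int (z : ℤ) : phi (z : ℝ) = 0 := by simp [phi]

lemma T_dyadic (k : ℤ) (N : ℕ) : ∃ j : ℤ, T ((k:ℝ)/2^N) = (j:ℝ)/2^N := by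
  set x : ℝ := (k:ℝ)/2^N with hx
  have h0 : ∀ n ∉ Finset.range N, phi (2^n * x) / 2^n = 0 := by
    intro n hn
    rw [Finset.mem_range, not_lt] at hn
    have : (2:ℝ)^n * x = ((k * 2^(n-N) : ℤ) : ℝ) := by
      push_cast
      rw [hx]
      field_simp
      have h2 : (2:ℝ)^n = 2^(n-N) * 2^N := by rw [← pow_add]; congr 1; omega
      rw [h2]; ring
    rw [this, phi_int, zero_div]
  refine ⟨∑ n ∈ Finset.range N, |k - round ((2:ℝ)^n * x) * 2^(N-n)|, ?_⟩
  rw [T, tsum_eq_sum h0, Int.cast_sum, Finset.sum_div]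
  refine Finset.sum_congr rfl ?_
  intro n hn
  rw [Finset.mem_range] at hn
  set r : ℤ := round ((2:ℝ)^n * x) with hr
  have key : (2:ℝ)^n * x - r = (2^n/2^N) * ((k:ℝ) - r * 2^(N-n)) := by
    rw [hx]
    have : (2:ℝ)^n * (2:ℝ)^(N-n) = 2^N := by rw [← pow_add]; congr 1; omega
    field_simp
    linear_combination ((r:ℝ)) * this
  rw [phi, ← hr, key, abs_mul, abs_of_pos (by positivity : (0:ℝ) < 2^n/2^N)]
  push_cast
  rw [div_mul_eq_mul_div, div_div, mul_comm ((2:ℝ)^n) _, mul_div_assoc,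
    mul_comm ((2:ℝ)^N) _, ← div_div, div_self (by positivity : ((2:ℝ)^n) ≠ 0),
    one_div, ← div_eq_mul_inv]

lemma four_pow_mod3 (t : ℕ) : ∃ c : ℤ, (4:ℤ)^t = 3*c + 1 := by
  induction t with
  | zero => exact ⟨0, by norm_num⟩
  | succ t ih => obtain ⟨c, hc⟩ := ih; exact ⟨4*c+1, by rw [pow_succ, hc]; ring⟩

theorem stmt13 (y : ℝ)
    (hy : (∃ (k : ℤ) (n : ℕ), y = (k : ℝ) / 2 ^ n) ∨
          (∃ (n : ℕ), 1 ≤ n ∧ ∃ k : ℕ, y = (k : ℝ) / 4 ^ n + (2/3) * (1:ℝ) / 4 ^ n)) :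
    {x₀ : ℝ | ∃ m : ℕ, BalancedOfOrder x₀ m ∧
      T x₀ < y ∧ y < T x₀ + (2/3) * (1:ℝ) / 4 ^ m}.Finite := by
  have h24 : ∀ m : ℕ, (2:ℝ)^(2*m) = 4^m := by
    intro m; rw [pow_mul]; norm_num
  have key : ∃ M : ℕ, ∀ x₀ m, BalancedOfOrder x₀ m →
      T x₀ < y → y < T x₀ + (2/3) * (1:ℝ) / 4 ^ m → m < M := by
    rcases hy with ⟨k, n, rfl⟩ | ⟨n, hn1, k, rfl⟩
    · refine ⟨n+1, ?_⟩
      intro x₀ m hb h1 h2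
      by_contra hm
      push_neg at hm
      obtain ⟨_, ⟨kx, hkx⟩, _⟩ := hb
      obtain ⟨j, hj⟩ := T_dyadic kx (2*m)
      rw [hkx, hj] at h1 h2
      have hpos : (0:ℝ) < 2^(2*m) := by positivity
      have hle : n ≤ 2*m := by omega
      have hy' : (k:ℝ)/2^n = ((k * 2^(2*m-n) : ℤ):ℝ)/2^(2*m) := by
        push_cast
        rw [div_eq_div_iff (by positivity) (by positivity), mul_assoc, ← pow_add]
        congr 2; omega
      rw [hy'] at h1 h2
      have hjk : j < k * 2^(2*m-n) := by
        have := (div_lt_div_iff_of_pos_right hpos).mp h1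
        exact_mod_cast this
      have hjk1 : (j:ℝ) + 1 ≤ ((k * 2^(2*m-n) : ℤ):ℝ) := by exact_mod_cast hjk
      rw [← h24 m, mul_one, ← add_div] at h2
      have hK := (div_lt_div_iff_of_pos_right hpos).mp h2
      linarith
    · refine ⟨n, ?_⟩
      intro x₀ m hb h1 h2
      by_contra hm
      push_neg at hm
      obtain ⟨_, ⟨kx, hkx⟩, _⟩ := hb
      obtain ⟨j, hj⟩ := T_dyadic kx (2*m)
      rw [hkx, hj] at h1 h2
      obtain ⟨c, hc⟩ := four_pow_mod3 (m - n)
      have hcR : ((4:ℝ))^(m-n) = 3*(c:ℝ)+1 := by exact_mod_cast hc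
      have h4m : (4:ℝ)^m = 4^n * 4^(m-n) := by rw [← pow_add]; congr 1; omega
      have h4pos : (0:ℝ) < 4^m := by positivity
      have h4npos : (0:ℝ) < 4^n := by positivity
      set q : ℤ := 4^(m-n)*k + 2*c - j with hq
      have hqR : (q:ℝ) + 2/3 = 4^m * (((k:ℝ)/4^n + (2/3)*(1:ℝ)/4^n) - (j:ℝ)/2^(2*m)) := by
        rw [h24 m, hq, h4m]
        push_cast
        field_simp
        linear_combination (-2:ℝ) * hcR
      have hA : (0:ℝ) < (q:ℝ) + 2/3 := by
        rw [hqR]; exact mul_pos h4pos (by linarith)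
      have hfe : (4:ℝ)^m * ((2/3)*(1:ℝ)/4^m) = 2/3 := by field_simp
      have hd : ((k:ℝ)/4^n + (2/3)*(1:ℝ)/4^n) - (j:ℝ)/2^(2*m) < (2/3)*(1:ℝ)/4^m := by
        linarith
      have hB' := mul_lt_mul_of_pos_left hd h4pos
      rw [hfe] at hB'
      have hB : (q:ℝ) + 2/3 < 2/3 := by rw [hqR]; exact hB'
      have hq0 : q < 0 := by exact_mod_cast (show (q:ℝ) < 0 by linarith)
      have hq1 : (-1:ℤ) < q := by exact_mod_cast (show (-1:ℝ) < (q:ℝ) by linarith)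
      omega
  obtain ⟨M, hM⟩ := key
  apply Set.Finite.subset (Set.Finite.biUnion (Set.finite_Iio M)
    (fun m _ => (Set.finite_Icc (0:ℤ) (2^(2*m))).image (fun k : ℤ => (k:ℝ)/2^(2*m))))
  rintro x₀ ⟨m, hb, h1, h2⟩
  refine Set.mem_biUnion (hM x₀ m hb h1 h2) ?_
  obtain ⟨⟨hx0, hx1⟩, ⟨kx, hkx⟩, _⟩ := hb
  have hD : (0:ℝ) < 2^(2*m) := by positivity
  rw [hkx] at hx0 hx1
  refine ⟨kx, ⟨?_, ?_⟩, hkx.symm⟩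
  · have := (le_div_iff₀ hD).mp hx0
    rw [zero_mul] at this
    exact_mod_cast this
  · have := (div_lt_one hD).mp hx1
    have : (kx:ℝ) < ((2^(2*m) : ℤ):ℝ) := by push_cast; exact_mod_cast this
    exact le_of_lt (by exact_mod_cast this)
end

section
/- Let r : ℕ → ℝ be a sequence with r_n ∈ {-1, 1} for all n, and define f(x) = ∑_{n=0}^∞ (r_n/2^n)·φ(2^n x). For x ∈ [0,1) set D_k^r(x) = ∑_{j=1}^k r_{j-1}·(-1)^{ε_j(x)}. Then for every x ∈ [0,1), f(x) = C(r) - (1/4)·∑_{n=1}^∞ (-1)^{ε_{n+1}(x)}·D_n^r(x)/2^n, where C(r) = ∑_{n=0}^∞ r_n/2^{n+2} (all series converge absolutely). -/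
open Set MeasureTheory ENNReal

/-- `D` for the signed Takagi function with sign sequence `r`. -/
noncomputable def Dr (r : ℕ → ℝ) (k : ℕ) (x : ℝ) : ℝ :=
  ∑ j ∈ Finset.Icc 1 k, r (j - 1) * (1 - 2 * (eps j x : ℝ))

noncomputable def E (x : ℝ) (j : ℕ) : ℝ := 1 - 2 * (eps j x : ℝ)

noncomputable def g2 (r : ℕ → ℝ) (x : ℝ) (p : ℕ × ℕ) : ℝ :=
  -(r p.1 * E x (p.1+1) * E x (p.1+p.2+2)) / 2^(p.1+p.2+3)

noncomputable def H2 (r : ℕ → ℝ) (x : ℝ) (q : ℕ × ℕ) : ℝ :=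
  if q.2 ≤ q.1 then -(r q.2 * E x (q.2+1) * E x (q.1+2)) / 2^(q.1+3) else 0
lemma eps_mem_s18 (j : ℕ) (x : ℝ) : eps (j+1) x = 0 ∨ eps (j+1) x = 1 := by
  have h1 : 2 * ⌊(2:ℝ)^j * x⌋ ≤ ⌊(2:ℝ)^(j+1) * x⌋ := by
    rw [Int.le_floor, pow_succ]
    push_cast
    have := Int.floor_le ((2:ℝ)^j * x)
    nlinarith [this]
  have h2 : ⌊(2:ℝ)^(j+1) * x⌋ < 2 * ⌊(2:ℝ)^j * x⌋ + 2 := by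
    rw [Int.floor_lt, pow_succ]
    push_cast
    have := Int.lt_floor_add_one ((2:ℝ)^j * x)
    nlinarith [this]
  simp only [eps, Nat.add_sub_cancel]
  omega

lemma eps_nonneg (j : ℕ) (x : ℝ) : (0:ℝ) ≤ (eps (j+1) x : ℝ) := by
  rcases eps_mem_s18 j x with h | h <;> rw [h] <;> norm_num

lemma eps_le_one (j : ℕ) (x : ℝ) : (eps (j+1) x : ℝ) ≤ 1 := by
  rcases eps_mem_s18 j x with h | h <;> rw [h] <;> norm_num

lemma fract_hasSum (x : ℝ) (n : ℕ) :
    HasSum (fun m : ℕ => (eps (n+1+m) x : ℝ) / 2^(m+1)) (Int.fract ((2:ℝ)^n * x)) := by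
  have hsummable : Summable (fun m : ℕ => (eps (n+1+m) x : ℝ) / 2^(m+1)) := by
    apply Summable.of_nonneg_of_le
      (fun m => by
        have := eps_nonneg (n+m) x
        rw [show n+m+1 = n+1+m by omega] at this
        positivity)
      (fun m => ?_) (summable_geometric_two.mul_left (1/2))
    · have h1 := eps_le_one (n+m) x
      rw [show n+m+1 = n+1+m by omega] at h1
      have h2 : (0:ℝ) < 2^(m+1) := by positivity
      rw [div_le_iff₀ h2]
      have h3 : (1/2:ℝ)^m * 2^m = 1 := by rw [← mul_pow]; norm_num
      rw [pow_succ]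
      nlinarith [h3]
  rw [hsummable.hasSum_iff_tendsto_nat]
  have hps : ∀ M : ℕ, ∑ m ∈ Finset.range M, (eps (n+1+m) x : ℝ) / 2^(m+1)
      = (⌊(2:ℝ)^(n+M) * x⌋ : ℝ)/2^M - (⌊(2:ℝ)^n * x⌋ : ℝ) := by
    intro M
    induction M with
    | zero => simp
    | succ M ih =>
      rw [Finset.sum_range_succ, ih]
      have : eps (n+1+M) x = ⌊(2:ℝ)^(n+M+1) * x⌋ - 2 * ⌊(2:ℝ)^(n+M) * x⌋ := by
        simp only [eps, Nat.add_sub_cancel]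
        norm_num [show n+1+M = n+M+1 by omega]
      rw [this]
      push_cast
      field_simp
      ring
  simp only [hps]
  have h1 : Filter.Tendsto (fun M : ℕ => (⌊(2:ℝ)^(n+M) * x⌋ : ℝ)/2^M) Filter.atTop
      (nhds ((2:ℝ)^n * x)) := by
    have heq : ∀ M : ℕ, (2:ℝ)^n * x * 2^M = 2^(n+M) * x := by
      intro M; rw [pow_add]; ring
    have hlow : ∀ M : ℕ, (2:ℝ)^n * x - (1/2)^M ≤ (⌊(2:ℝ)^(n+M) * x⌋ : ℝ)/2^M := by
      intro M
      have h2 : (0:ℝ) < 2^M := by positivity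
      rw [le_div_iff₀ h2, sub_mul]
      have hfl := Int.lt_floor_add_one ((2:ℝ)^(n+M) * x)
      have hx2 : (1/2:ℝ)^M * 2^M = 1 := by rw [← mul_pow]; norm_num
      rw [heq M, hx2]
      linarith
    have hhigh : ∀ M : ℕ, (⌊(2:ℝ)^(n+M) * x⌋ : ℝ)/2^M ≤ (2:ℝ)^n * x := by
      intro M
      have h2 : (0:ℝ) < 2^M := by positivity
      rw [div_le_iff₀ h2, heq M]
      exact Int.floor_le _
    have hl : Filter.Tendsto (fun M : ℕ => (2:ℝ)^n * x - (1/2)^M) Filter.atTop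
        (nhds ((2:ℝ)^n * x)) := by
      have h0 := tendsto_pow_atTop_nhds_zero_of_lt_one (by norm_num : (0:ℝ) ≤ 1/2)
        (by norm_num : (1/2:ℝ) < 1)
      simpa using Filter.Tendsto.const_sub ((2:ℝ)^n * x) h0
    exact tendsto_of_tendsto_of_tendsto_of_le_of_le hl tendsto_const_nhds hlow hhigh
  rw [show Int.fract ((2:ℝ)^n * x) = (2:ℝ)^n * x - (⌊(2:ℝ)^n * x⌋ : ℝ) from rfl]
  exact h1.sub tendsto_const_nhds

lemma eps_floor (n : ℕ) (x : ℝ) : eps (n+1) x = ⌊2 * Int.fract ((2:ℝ)^n * x)⌋ := by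
  have h : 2 * Int.fract ((2:ℝ)^n * x) = 2^(n+1) * x - ((2 * ⌊(2:ℝ)^n * x⌋ : ℤ) : ℝ) := by
    rw [Int.fract]
    push_cast
    rw [pow_succ]
    ring
  rw [h, Int.floor_sub_intCast]
  simp only [eps, Nat.add_sub_cancel]

lemma fract_two_mul (n : ℕ) (x : ℝ) :
    Int.fract ((2:ℝ)^(n+1) * x) = 2 * Int.fract ((2:ℝ)^n * x) - (eps (n+1) x : ℝ) := by
  have h : (2:ℝ)^(n+1) * x = 2 * Int.fract ((2:ℝ)^n * x) + ((2 * ⌊(2:ℝ)^n * x⌋ : ℤ) : ℝ) := by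
    rw [Int.fract]; push_cast; rw [pow_succ]; ring
  rw [h, Int.fract_add_intCast, Int.fract, eps_floor]

lemma phi_formula (n : ℕ) (x : ℝ) :
    phi ((2:ℝ)^n * x) = (1 - (1 - 2 * (eps (n+1) x : ℝ)))/4
      + (1 - 2 * (eps (n+1) x : ℝ)) * Int.fract ((2:ℝ)^(n+1) * x) / 2 := by
  set t := Int.fract ((2:ℝ)^n * x) with ht
  have ht0 : 0 ≤ t := Int.fract_nonneg _
  have ht1 : t < 1 := Int.fract_lt_one _
  have hphi : phi ((2:ℝ)^n * x) = |t - (⌊t + 1/2⌋ : ℝ)| := by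
    rw [phi, round_eq]
    have h1 : (2:ℝ)^n * x = t + (⌊(2:ℝ)^n * x⌋ : ℝ) := by rw [ht, Int.fract]; ring
    rw [h1]
    rw [show t + (⌊(2:ℝ)^n * x⌋:ℝ) + 1/2 = (t + 1/2) + (⌊(2:ℝ)^n * x⌋:ℝ) by ring]
    rw [show ((t + 1/2) + (⌊(2:ℝ)^n * x⌋:ℝ)) = ((t + 1/2) + (⌊(2:ℝ)^n*x⌋:ℤ)) by push_cast; ring,
      Int.floor_add_intCast]
    push_cast
    ring_nf
  rw [fract_two_mul, hphi]
  rcases eps_mem_s18 n x with h | h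
  · have h2t : ⌊2 * t⌋ = 0 := by rw [← eps_floor, h]
    have h2t' : 2 * t < 1 := by
      have := (Int.floor_eq_iff.mp h2t).2
      push_cast at this
      linarith
    have hfl : ⌊t + 1/2⌋ = 0 := by
      rw [Int.floor_eq_iff]
      constructor <;> push_cast <;> linarith
    rw [h, hfl]
    push_cast
    rw [abs_of_nonneg (by linarith)]
    ring
  · have h2t : ⌊2 * t⌋ = 1 := by rw [← eps_floor, h]
    have h2t' : 1 ≤ 2 * t := by
      have := (Int.floor_eq_iff.mp h2t).1
      push_cast at this
      linarith
    have hfl : ⌊t + 1/2⌋ = 1 := by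
      rw [Int.floor_eq_iff]
      constructor <;> push_cast <;> linarith
    rw [h, hfl]
    push_cast
    rw [abs_of_nonpos (by linarith)]
    ring

lemma E_abs (j : ℕ) (x : ℝ) : |E x (j+1)| = 1 := by
  rcases eps_mem_s18 j x with h | h <;> simp [E, h] <;> norm_num

lemma phi_hasSum (n : ℕ) (x : ℝ) :
    HasSum (fun m : ℕ => (1 - E x (n+1) * E x (n+2+m)) / 2^(m+3)) (phi ((2:ℝ)^n * x)) := by
  have h1 := fract_hasSum x (n+1)
  have hgeo : HasSum (fun m : ℕ => ((1:ℝ)/2)^m) 2 := hasSum_geometric_two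
  have h2 := (hgeo.mul_left ((1 - E x (n+1))/8)).add (h1.mul_left (E x (n+1)/2))
  have hfe : (fun m : ℕ => (1 - E x (n+1) * E x (n+2+m)) / 2^(m+3))
      = fun m : ℕ => (1 - E x (n+1))/8 * (1/2)^m + E x (n+1)/2 * ((eps (n+1+1+m) x : ℝ)/2^(m+1)) := by
    funext m
    rw [show n+1+1+m = n+2+m by omega]
    simp only [E]
    have hp : (2:ℝ)^(m+3) = 2^m * 8 := by rw [pow_add]; norm_num
    have hp2 : (2:ℝ)^(m+1) = 2^m * 2 := by rw [pow_add]; norm_num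
    rw [hp, hp2]
    have h2m : (2:ℝ)^m ≠ 0 := by positivity
    simp only [div_pow, one_pow]
    field_simp
    ring
  rw [hfe, phi_formula]
  convert h2 using 1
  case e'_3 => rfl
  simp only [E]
  push_cast
  ring

lemma fiber_hasSum (r : ℕ → ℝ) (n : ℕ) (x : ℝ) :
    HasSum (fun m : ℕ => -(r n * E x (n+1) * E x (n+m+2)) / 2^(n+m+3))
      (r n / 2^n * phi ((2:ℝ)^n * x) - r n / 2^(n+2)) := by
  have h1 := (phi_hasSum n x).mul_left (r n / 2^n)
  have hgeo : HasSum (fun m : ℕ => (r n / 2^(n+3)) * ((1:ℝ)/2)^m) ((r n / 2^(n+3)) * 2) :=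
    hasSum_geometric_two.mul_left _
  have h2 := h1.sub hgeo
  have hfe : (fun m : ℕ => r n / 2^n * ((1 - E x (n+1) * E x (n+2+m)) / 2^(m+3))
        - (r n / 2^(n+3)) * ((1:ℝ)/2)^m)
      = fun m : ℕ => -(r n * E x (n+1) * E x (n+m+2)) / 2^(n+m+3) := by
    funext m
    rw [show n+2+m = n+m+2 by omega]
    have hp : (2:ℝ)^(n+m+3) = 2^n * (2^m * 8) := by rw [pow_add, pow_add]; norm_num; ring
    have hp2 : (2:ℝ)^(m+3) = 2^m * 8 := by rw [pow_add]; norm_num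
    have hp3 : (2:ℝ)^(n+3) = 2^n * 8 := by rw [pow_add]; norm_num
    rw [hp, hp2, hp3]
    have h2n : (2:ℝ)^n ≠ 0 := by positivity
    have h2m : (2:ℝ)^m ≠ 0 := by positivity
    simp only [div_pow, one_pow]
    field_simp
    ring
  rw [hfe] at h2
  convert h2 using 1
  case e'_3 => rfl
  have hp3 : (2:ℝ)^(n+3) = 2^(n+2) * 2 := by rw [pow_succ]
  rw [hp3]
  ring

section Main
variable (r : ℕ → ℝ) (x : ℝ)

lemma g2_summable (hr : ∀ n, r n = -1 ∨ r n = 1) : Summable (g2 r x) := by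
  rw [← summable_abs_iff]
  have hmaj : Summable (fun p : ℕ × ℕ => ((1:ℝ)/2)^p.1 * (1/2)^p.2) :=
    Summable.mul_of_nonneg summable_geometric_two summable_geometric_two
      (fun n => by positivity) (fun n => by positivity)
  apply Summable.of_nonneg_of_le (fun p => abs_nonneg _) (fun p => ?_) hmaj
  have hrabs : |r p.1| = 1 := by rcases hr p.1 with h | h <;> simp [h]
  have hE1 := E_abs p.1 x
  have hE2 := E_abs (p.1+p.2+1) x
  rw [show p.1+p.2+1+1 = p.1+p.2+2 by omega] at hE2
  rw [g2, abs_div, abs_neg, abs_mul, abs_mul, hrabs, hE1, hE2]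
  have hpos : (0:ℝ) < 2^(p.1+p.2+3) := by positivity
  rw [abs_of_pos hpos]
  simp only [one_mul, mul_one]
  rw [div_le_iff₀ hpos]
  have : ((1:ℝ)/2)^p.1 * (1/2)^p.2 * 2^(p.1+p.2+3) = 8 := by
    rw [pow_add, pow_add]
    have h1 : (0:ℝ) < 2^p.1 := by positivity
    have h2 : (0:ℝ) < 2^p.2 := by positivity
    simp only [div_pow, one_pow]
    field_simp
    ring
  rw [this]
  norm_num

lemma H2_eq_g2 : H2 r x ∘ (fun p : ℕ × ℕ => (p.1 + p.2, p.1)) = g2 r x := by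
  funext p
  simp only [Function.comp, H2, g2, if_pos (Nat.le_add_right p.1 p.2)]

lemma inj_aux : Function.Injective (fun p : ℕ × ℕ => (p.1 + p.2, p.1)) := by
  intro p q h
  simp only [Prod.mk.injEq] at h
  obtain ⟨h1, h2⟩ := h
  exact Prod.ext h2 (by omega)

lemma H2_support : ∀ q ∉ Set.range (fun p : ℕ × ℕ => (p.1 + p.2, p.1)), H2 r x q = 0 := by
  intro q hq
  rw [H2, if_neg]
  intro hle
  exact hq ⟨(q.2, q.1 - q.2), by simp [Prod.ext_iff]; omega⟩

lemma H2_fiber (j : ℕ) :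
    HasSum (fun n : ℕ => H2 r x (j, n)) (-(E x (j+2) * Dr r (j+1) x) / 2^(j+3)) := by
  have hsupp : ∀ n ∉ Finset.range (j+1), H2 r x (j, n) = 0 := by
    intro n hn
    rw [Finset.mem_range] at hn
    rw [H2, if_neg (by simpa using by omega : ¬ n ≤ j)]
  have : HasSum (fun n : ℕ => H2 r x (j, n)) _ := hasSum_sum_of_ne_finset_zero hsupp
  convert this using 1
  have hDr : ∀ k : ℕ, Dr r (k+1) x = ∑ n ∈ Finset.range (k+1), r n * E x (n+1) := by
    intro k
    induction k with
    | zero => simp [Dr, E]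
    | succ k ih =>
      rw [Finset.sum_range_succ, ← ih, Dr, Dr, Finset.sum_Icc_succ_top (by omega)]
      simp only [Nat.add_sub_cancel, E]
  rw [hDr j]
  rw [Finset.mul_sum, neg_div, Finset.sum_div, ← Finset.sum_neg_distrib]
  apply Finset.sum_congr rfl
  intro n hn
  rw [Finset.mem_range] at hn
  rw [H2, if_pos (by omega : n ≤ j)]
  ring

end Main

theorem stmt18 (r : ℕ → ℝ) (hr : ∀ n, r n = -1 ∨ r n = 1)
    (f : ℝ → ℝ) (hf : ∀ x, f x = ∑' n : ℕ, r n / 2 ^ n * phi (2 ^ n * x))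
    (x : ℝ) (hx : x ∈ Set.Ico (0:ℝ) 1) :
    Summable (fun n : ℕ => r n / 2 ^ n * phi (2 ^ n * x)) ∧
    Summable (fun n : ℕ => r n / 2 ^ (n + 2)) ∧
    Summable (fun n : ℕ => (1 - 2 * (eps (n + 2) x : ℝ)) * Dr r (n + 1) x / 2 ^ (n + 1)) ∧
    f x = (∑' n : ℕ, r n / 2 ^ (n + 2)) -
      (1/4) * ∑' n : ℕ, (1 - 2 * (eps (n + 2) x : ℝ)) * Dr r (n + 1) x / 2 ^ (n + 1) := by
  have hg2 := g2_summable r x hr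
  have hH2 : HasSum (H2 r x) (∑' p, g2 r x p) := by
    rw [← (Function.Injective.hasSum_iff inj_aux (H2_support r x)), H2_eq_g2]
    exact hg2.hasSum
  -- sum C
  have hC : Summable (fun n : ℕ => r n / 2 ^ (n + 2)) := by
    rw [← summable_abs_iff]
    apply Summable.of_nonneg_of_le (fun n => abs_nonneg _) (fun n => ?_)
      (summable_geometric_two.mul_left (1/4))
    have hrabs : |r n| = 1 := by rcases hr n with h | h <;> simp [h]
    have hpos : (0:ℝ) < 2^(n+2) := by positivity
    rw [abs_div, hrabs, abs_of_pos hpos, div_le_iff₀ hpos]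
    have : (1/4:ℝ) * (1/2)^n * 2^(n+2) = 1 := by
      rw [pow_add]
      have h1 : (0:ℝ) < 2^n := by positivity
      simp only [div_pow, one_pow]
      field_simp [← mul_pow]
      ring
    rw [this]
  -- fiberwise over n
  have hfib1 : HasSum (fun n : ℕ => r n / 2^n * phi ((2:ℝ)^n * x) - r n / 2^(n+2))
      (∑' p, g2 r x p) :=
    hg2.hasSum.prod_fiberwise (fun n => fiber_hasSum r n x)
  have h1 : (fun n : ℕ => (r n / 2^n * phi ((2:ℝ)^n * x) - r n / 2^(n+2)) + r n / 2^(n+2))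
      = fun n : ℕ => r n / 2^n * phi ((2:ℝ)^n * x) := by
    funext n; ring
  have hfSum : HasSum (fun n : ℕ => r n / 2^n * phi ((2:ℝ)^n * x))
      ((∑' p, g2 r x p) + ∑' n : ℕ, r n / 2 ^ (n + 2)) := by
    have := hfib1.add hC.hasSum
    rwa [h1] at this
  have hDiag : HasSum (fun j : ℕ => -(E x (j+2) * Dr r (j+1) x) / 2^(j+3)) (∑' p, g2 r x p) :=
    hH2.prod_fiberwise (H2_fiber r x)
  have hDiag4 := hDiag.mul_left (-4)
  have h2 : (fun j : ℕ => (-4 : ℝ) * (-(E x (j+2) * Dr r (j+1) x) / 2^(j+3)))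
      = fun j : ℕ => (1 - 2 * (eps (j + 2) x : ℝ)) * Dr r (j + 1) x / 2 ^ (j + 1) := by
    funext j
    simp only [E]
    rw [show (2:ℝ)^(j+3) = 2^(j+1) * 4 by rw [pow_add, pow_add]; ring]
    have hp : (0:ℝ) < 2^(j+1) := by positivity
    field_simp
  rw [h2] at hDiag4
  refine ⟨hfSum.summable, hC, hDiag4.summable, ?_⟩
  rw [hf x, hfSum.tsum_eq, hDiag4.tsum_eq]
  ring
end
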